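/- Potential decrease under local rewriting: Fix a segment length Ω, an additive cost function cost : Circuit → ℕ, and an oracle. If C →_Ω C' (by either an Lopt step or a ShiftLeft step), then Φ(C') < Φ(C) in the lexicographic order on ℕ × ℕ, where Φ(C) = (cost(C), IndexSum(C)). -/

import Mathlib

/-- A circuit is a finite sequence of layers `L_0, …, L_{d−1}`, each layer a finite
set of gates acting on pairwise disjoint qubits. Concatenation `C1;C2` is list
append. -/
abbrev Circuit (G : Type) := List (Finset G)

/-- The multiset of all gates of a circuit (layer by layer). -/
def gatesOf {G : Type} (C : Circuit G) : Multiset G := (C.map Finset.val).sum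

/-- `IndexSum(C) = Σ_i i·|L_i|`: the sum over layer indices `i` of `i` times the
number of gates in layer `L_i`. -/
def indexSum {G : Type} (C : Circuit G) : ℕ :=
  (C.zipIdx.map (fun p => p.2 * p.1.card)).sum

/-- The potential `Φ(C) = (cost(C), IndexSum(C)) ∈ ℕ × ℕ`. -/
def potential {G : Type} (cost : Circuit G → ℕ) (C : Circuit G) : ℕ × ℕ :=
  (cost C, indexSum C)

/-- A `(ShiftLeft)` rewrite step: a gate `G ∈ L2` whose qubits are unused in the
adjacent earlier layer `L1` is moved into `L1`. -/
inductive ShiftLeftStep {G Q : Type} [DecidableEq G] (qubits : G → Finset Q) :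
    Circuit G → Circuit G → Prop where
  | mk : ∀ (P S : Circuit G) (L1 L2 : Finset G) (g : G),
      g ∈ L2 → g ∉ L1 →
      (∀ g' ∈ L1, Disjoint (qubits g) (qubits g')) →
      ShiftLeftStep qubits (P ++ [L1, L2] ++ S) (P ++ [insert g L1, L2.erase g] ++ S)

/-- An `(Lopt)` rewrite step: a segment `X` of length `Ω` that the oracle improves is
replaced by `oracle(X)`. -/
inductive LoptStep {G : Type} (Ω : ℕ) (oracle : Circuit G → Circuit G)
    (cost : Circuit G → ℕ) : Circuit G → Circuit G → Prop where
  | mk : ∀ P X S : Circuit G, X.length = Ω → cost (oracle X) < cost X →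
      LoptStep Ω oracle cost (P ++ X ++ S) (P ++ oracle X ++ S)

/-- The rewrite relation `C →_Ω C'`: either an `(Lopt)` step or a `(ShiftLeft)` step. -/
def RewriteStep {G Q : Type} [DecidableEq G] (Ω : ℕ) (oracle : Circuit G → Circuit G)
    (cost : Circuit G → ℕ) (qubits : G → Finset Q) (C C' : Circuit G) : Prop :=
  LoptStep Ω oracle cost C C' ∨ ShiftLeftStep qubits C C'

/-- Weighted sum starting at index `k`. -/
def wsum {G : Type} (k : ℕ) : Circuit G → ℕ
  | [] => 0
  | L :: C => k * L.card + wsum (k + 1) C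

lemma enumFrom_wsum {G : Type} (C : Circuit G) : ∀ k : ℕ,
    ((C.zipIdx k).map (fun p => p.2 * p.1.card)).sum = wsum k C := by
  induction C with
  | nil => intro k; rfl
  | cons L C ih => intro k; simp [List.zipIdx_cons, wsum, ih]

lemma indexSum_eq_wsum {G : Type} (C : Circuit G) : indexSum C = wsum 0 C := by
  rw [indexSum, enumFrom_wsum]

lemma wsum_append {G : Type} (A B : Circuit G) : ∀ k : ℕ,
    wsum k (A ++ B) = wsum k A + wsum (k + A.length) B := by
  induction A with
  | nil => intro k; simp [wsum]
  | cons L A ih =>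
      intro k
      rw [List.cons_append, wsum, wsum, ih, List.length_cons]
      ring_nf

lemma gatesOf_append {G : Type} (A B : Circuit G) :
    gatesOf (A ++ B) = gatesOf A + gatesOf B := by
  simp [gatesOf]

/-- **Potential decrease under local rewriting.** Fix a segment length `Ω`, an
additive cost function `cost : Circuit → ℕ` (additivity makes the cost of a circuit
depend only on the multiset of its gates layer-by-layer, recorded by `hmulti`), and
an oracle (semantics-preserving and cost-nonincreasing). If `C →_Ω C'` (by either an
`Lopt` step or a `ShiftLeft` step), then `Φ(C') < Φ(C)` in the lexicographic order
on `ℕ × ℕ`, where `Φ(C) = (cost(C), IndexSum(C))`. -/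
theorem potential_decrease {G Q S : Type} [DecidableEq G] (Ω : ℕ)
    (qubits : G → Finset Q)
    (cost : Circuit G → ℕ)
    (hadd : ∀ C1 C2 : Circuit G, cost (C1 ++ C2) = cost C1 + cost C2)
    (hmulti : ∀ C C' : Circuit G, gatesOf C = gatesOf C' → cost C = cost C')
    (sem : Circuit G → S)
    (oracle : Circuit G → Circuit G)
    (hsem : ∀ C : Circuit G, sem (oracle C) = sem C)
    (horacle : ∀ C : Circuit G, cost (oracle C) ≤ cost C)
    (C C' : Circuit G)
    (hstep : RewriteStep Ω oracle cost qubits C C') :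
    Prod.Lex (· < ·) (· < ·) (potential cost C') (potential cost C) := by
  rcases hstep with h | h
  · rcases h with ⟨P, X, S, hlen, hlt⟩
    apply Prod.Lex.left
    simp only [hadd]
    omega
  · rcases h with ⟨P, S, L1, L2, g, hg2, hg1, hdisj⟩
    have hcost : cost (P ++ [insert g L1, L2.erase g] ++ S) = cost (P ++ [L1, L2] ++ S) := by
      apply hmulti
      simp only [gatesOf_append]
      congr 1
      congr 1
      have h1 : (insert g L1).val = g ::ₘ L1.val := Finset.insert_val_of_notMem hg1
      have h2 : g ::ₘ (L2.erase g).val = L2.val := by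
        rw [Finset.erase_val]
        exact Multiset.cons_erase hg2
      simp only [gatesOf, List.map_cons, List.map_nil, Multiset.sum_cons, Multiset.sum_zero,
        add_zero, h1]
      rw [← h2]
      simp [Multiset.cons_swap]
    have hidx : indexSum (P ++ [insert g L1, L2.erase g] ++ S) <
        indexSum (P ++ [L1, L2] ++ S) := by
      simp only [indexSum_eq_wsum, wsum_append, List.length_append, List.length_cons,
        List.length_nil]
      have hcard1 : (insert g L1).card = L1.card + 1 := Finset.card_insert_of_notMem hg1
      have hcard2 : (L2.erase g).card = L2.card - 1 := Finset.card_erase_of_mem hg2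
      have hpos : 1 ≤ L2.card := Finset.card_pos.mpr ⟨g, hg2⟩
      simp only [wsum, hcard1, hcard2, mul_zero, add_zero]
      obtain ⟨m, hm⟩ : ∃ m, L2.card = m + 1 := ⟨L2.card - 1, by omega⟩
      rw [hm]
      simp only [Nat.add_sub_cancel, zero_add, Nat.mul_add, Nat.add_mul]
      omega
    unfold potential
    rw [hcost]
    exact Prod.Lex.right _ hidx
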